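/- arXiv:quant-ph/0201013 — 2 statements merged into one kernel-verified Lean document; each statement's English description precedes it below -/
import Mathlib

section
/- Semiidempotence holds in one direction: for any unit vector ψ of the n-fold tensor power of ℂ², Prob(AND(ψ, ψ)) ≤ Prob(ψ). -/
open Complex Finset

noncomputable section

/-- The `n`-fold tensor power of `ℂ²`, identified with `EuclideanSpace ℂ (Fin (2^n))`. -/
abbrev QReg (n : ℕ) := EuclideanSpace ℂ (Fin (2 ^ n))

/-- Flip the last bit of a binary index. -/
def flipIdx {N : ℕ} (j : Fin N) : Fin N :=
  ⟨(j.val ^^^ 1) % N, Nat.mod_lt _ j.pos⟩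

/-- The gate `NOT⁽ⁿ⁾`: flips the last bit of each basis label, i.e. swaps the
coordinates `a_{2k}` and `a_{2k+1}`. -/
def NOTg (n : ℕ) (ψ : QReg n) : QReg n := WithLp.toLp 2 (fun j => ψ (flipIdx j))

/-- The gate `√NOT⁽ⁿ⁾`: replaces each coordinate pair `(a_{2k}, a_{2k+1})` by
`(½(1+i)a_{2k} + ½(1−i)a_{2k+1}, ½(1−i)a_{2k} + ½(1+i)a_{2k+1})`. -/
def sqNOTg (n : ℕ) (ψ : QReg n) : QReg n := WithLp.toLp 2 (fun j =>
  if j.val % 2 = 0 then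
    (1 + Complex.I) / 2 * ψ j + (1 - Complex.I) / 2 * ψ (flipIdx j)
  else
    (1 - Complex.I) / 2 * ψ (flipIdx j) + (1 + Complex.I) / 2 * ψ j)

/-- Action of the Toffoli gate `T⁽ⁿ'ᵐ'¹⁾` on basis indices: if the bits `xₙ`
(weight `2^(m+1)`) and `y_m` (weight `2`) are both `1`, flip the last bit `z`. -/
def toffIdx (n m : ℕ) (j : Fin (2 ^ (n + m + 1))) : Fin (2 ^ (n + m + 1)) :=
  if (j.val / 2 ^ (m + 1)) % 2 = 1 ∧ (j.val / 2) % 2 = 1 then flipIdx j else j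

/-- The Toffoli gate `T⁽ⁿ'ᵐ'¹⁾`. -/
def Tg (n m : ℕ) (ψ : QReg (n + m + 1)) : QReg (n + m + 1) := WithLp.toLp 2 (fun j => ψ (toffIdx n m j))

/-- Tensor product of coefficient vectors: `(ψ ⊗ φ)_{2^m·j + k} = ψ_j · φ_k`. -/
def tensor {n m : ℕ} (ψ : QReg n) (φ : QReg m) : QReg (n + m) := WithLp.toLp 2 (fun j =>
  ψ ⟨j.val / 2 ^ m, by
        have h : (j : ℕ) < 2 ^ n * 2 ^ m :=
          lt_of_lt_of_le j.isLt (le_of_eq (pow_add 2 n m))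
        exact (Nat.div_lt_iff_lt_mul (Nat.two_pow_pos m)).mpr h⟩ *
  φ ⟨j.val % 2 ^ m, Nat.mod_lt _ (Nat.two_pow_pos m)⟩)

/-- The bit `|0⟩ = e₀ ∈ ℂ²`. -/
def ket0 : QReg 1 := WithLp.toLp 2 (fun j => if j.val = 0 then 1 else 0)

/-- `AND(ψ, φ) := T⁽ⁿ'ᵐ'¹⁾(ψ ⊗ φ ⊗ |0⟩)`. -/
def ANDg (n m : ℕ) (ψ : QReg n) (φ : QReg m) : QReg (n + m + 1) :=
  Tg n m (tensor (tensor ψ φ) ket0)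

/-- `OR(ψ, φ) := NOT(AND(NOT ψ, NOT φ))`. -/
def ORg (n m : ℕ) (ψ : QReg n) (φ : QReg m) : QReg (n + m + 1) :=
  NOTg (n + m + 1) (ANDg n m (NOTg n ψ) (NOTg m φ))

/-- The probability-value of a vector: the sum of `‖a_j‖²` over the odd indices `j`
(those whose basis label ends with the bit `1`). -/
def Prob {n : ℕ} (ψ : QReg n) : ℝ :=
  ∑ j ∈ Finset.univ.filter (fun j : Fin (2 ^ n) => j.val % 2 = 1), ‖ψ j‖ ^ 2

lemma xor_one_of_odd' {j : ℕ} (h : j % 2 = 1) : j ^^^ 1 = j - 1 := by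
  obtain ⟨k, rfl⟩ : ∃ k, j = 2*k+1 := ⟨j/2, by omega⟩
  have h2 : (2*k+1) ^^^ 1 = 2*k := by
    apply Nat.eq_of_testBit_eq
    intro i
    cases i with
    | zero => simp [Nat.testBit_xor]; omega
    | succ i =>
      rw [Nat.testBit_succ, Nat.testBit_succ, Nat.xor_div_two]
      norm_num
      congr 1
      omega
  omega

lemma hN (n : ℕ) : (2:ℕ)^(n+n+1) = 2^(n+1) * 2^n := by rw [← pow_add]; ring_nf

lemma hx_lt (n : ℕ) (j : Fin (2^(n+n+1))) : j.val / 2^(n+1) < 2^n := by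
  have h : (j:ℕ) < 2^n * 2^(n+1) := lt_of_lt_of_le j.isLt (le_of_eq (by rw [hN n]; ring))
  exact (Nat.div_lt_iff_lt_mul (Nat.two_pow_pos _)).mpr h

lemma and_odd (n : ℕ) (ψ φ : QReg n) (j : Fin (2^(n+n+1))) (hj : j.val % 2 = 1) :
    ‖ANDg n n ψ φ j‖^2 =
      (if (j.val / 2^(n+1)) % 2 = 1 then
        ‖ψ ⟨j.val / 2^(n+1), hx_lt n j⟩‖^2 else 0) *
      (if (j.val / 2 % 2^n) % 2 = 1 then
        ‖φ ⟨j.val / 2 % 2^n, Nat.mod_lt _ (Nat.two_pow_pos n)⟩‖^2 else 0) := by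
  have hc2 : j.val / 2 % 2 = (j.val / 2 % 2^n) % 2 := by
    cases n with
    | zero =>
      have h2 : j.val < 2 := by have := j.isLt; norm_num at this; omega
      simp; omega
    | succ k =>
      rw [Nat.mod_mod_of_dvd _ (dvd_pow_self 2 (Nat.succ_ne_zero k))]
  by_cases hC : (j.val / 2^(n+1)) % 2 = 1 ∧ (j.val / 2) % 2 = 1
  · -- flip case
    have hfl : toffIdx n n j = ⟨j.val - 1, by have := j.isLt; omega⟩ := by
      apply Fin.ext
      rw [toffIdx, if_pos hC]
      show (j.val ^^^ 1) % 2^(n+n+1) = _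
      rw [xor_one_of_odd' hj, Nat.mod_eq_of_lt (by have := j.isLt; omega)]
    have h1 : (j.val - 1) / 2 = j.val / 2 := by omega
    have h2 : j.val/2/2^n = j.val/2^(n+1) := by
      rw [Nat.div_div_eq_div_mul]; congr 1; rw [pow_succ]; ring
    have hval : ANDg n n ψ φ j
        = ψ ⟨j.val / 2^(n+1), hx_lt n j⟩ * φ ⟨j.val/2 % 2^n, Nat.mod_lt _ (Nat.two_pow_pos n)⟩ := by
      show (tensor (tensor ψ φ) ket0) (toffIdx n n j) = _
      rw [hfl]
      simp only [tensor, ket0, Fin.val_mk, pow_one]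
      rw [if_pos (show (j.val - 1) % 2 = 0 by omega), mul_one]
      congr 1
      · exact congrArg (fun x => ψ x) (Fin.ext (by simp only [Fin.val_mk, pow_one, h1, h2]))
      · exact congrArg (fun x => φ x) (Fin.ext (by simp only [Fin.val_mk, pow_one, h1]))
    have hc2' : (j.val/2 % 2^n) % 2 = 1 := by rw [← hc2]; exact hC.2
    rw [hval, if_pos hC.1, if_pos hc2', norm_mul, mul_pow]
  · -- identity case
    have hid : toffIdx n n j = j := by rw [toffIdx, if_neg hC]
    have hval : ANDg n n ψ φ j = 0 := by
      show (tensor (tensor ψ φ) ket0) (toffIdx n n j) = 0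
      rw [hid]
      simp only [tensor, ket0, Fin.val_mk, pow_one]
      rw [if_neg (show ¬ (j.val % 2 = 0) by omega), mul_zero]
    rw [hval]
    rw [not_and_or] at hC
    rcases hC with h | h
    · simp [h]
    · rw [hc2] at h
      simp [h]

lemma hmap (n : ℕ) (x y : Fin (2^n)) : 2^(n+1) * x.val + 2 * y.val + 1 < 2^(n+n+1) := by
  have h1 : 2*y.val + 1 < 2^(n+1) := by
    have := y.isLt
    rw [pow_succ]
    omega
  calc 2^(n+1) * x.val + 2 * y.val + 1 = 2^(n+1)*x.val + (2*y.val+1) := by ring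
    _ < 2^(n+1)*x.val + 2^(n+1) := Nat.add_lt_add_left h1 _
    _ = 2^(n+1)*(x.val+1) := by ring
    _ ≤ 2^(n+1)*2^n := Nat.mul_le_mul_left _ x.isLt
    _ = 2^(n+n+1) := (hN n).symm

lemma prob_and (n : ℕ) (ψ φ : QReg n) :
    Prob (ANDg n n ψ φ) = Prob ψ * Prob φ := by
  have hP : (2:ℕ)^(n+1) = 2*2^n := by rw [pow_succ]; ring
  have e1 : Prob (ANDg n n ψ φ)
      = ∑ p ∈ (univ ×ˢ univ : Finset (Fin (2^n) × Fin (2^n))),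
          (if p.1.val % 2 = 1 then ‖ψ p.1‖^2 else 0) *
          (if p.2.val % 2 = 1 then ‖φ p.2‖^2 else 0) := by
    unfold Prob
    apply Finset.sum_nbij'
      (i := fun j => ((⟨j.val / 2^(n+1), hx_lt n j⟩ : Fin (2^n)),
                      (⟨j.val / 2 % 2^n, Nat.mod_lt _ (Nat.two_pow_pos n)⟩ : Fin (2^n))))
      (j := fun p => (⟨2^(n+1) * p.1.val + 2 * p.2.val + 1, hmap n p.1 p.2⟩ : Fin (2^(n+n+1))))
    · intro a _; simp
    · intro p _
      simp only [Finset.mem_filter, Finset.mem_univ, true_and, Fin.val_mk]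
      rw [hP, mul_assoc]
      omega
    · -- left inverse
      intro a ha
      simp only [Finset.mem_filter, Finset.mem_univ, true_and] at ha
      apply Fin.ext
      simp only [Fin.val_mk]
      have hd : a.val / 2 / 2^n = a.val / 2^(n+1) := by
        rw [Nat.div_div_eq_div_mul]; congr 1; rw [pow_succ]; ring
      have hdm := Nat.div_add_mod (a.val / 2) (2^n)
      calc 2^(n+1) * (a.val / 2^(n+1)) + 2 * (a.val / 2 % 2^n) + 1
          = 2 * (2^n * (a.val / 2 / 2^n) + a.val / 2 % 2^n) + 1 := by rw [hd, hP]; ring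
        _ = 2 * (a.val / 2) + 1 := by rw [hdm]
        _ = a.val := by omega
    · -- right inverse
      intro p _
      have hx := p.1.isLt
      have hy := p.2.isLt
      have key1 : (2^(n+1) * p.1.val + 2 * p.2.val + 1) / 2^(n+1) = p.1.val := by
        rw [Nat.add_assoc, Nat.mul_add_div (Nat.two_pow_pos (n+1)),
          Nat.div_eq_of_lt (by rw [hP]; omega), Nat.add_zero]
      have key2 : (2^(n+1) * p.1.val + 2 * p.2.val + 1) / 2 % 2^n = p.2.val := by
        have h2 : (2^(n+1) * p.1.val + 2 * p.2.val + 1) / 2 = 2^n * p.1.val + p.2.val := by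
          rw [hP, mul_assoc]
          omega
        rw [h2, Nat.mul_add_mod, Nat.mod_eq_of_lt hy]
      refine Prod.ext ?_ ?_
      · apply Fin.ext; simpa using key1
      · apply Fin.ext; simpa using key2
    · intro a ha
      simp only [Finset.mem_filter, Finset.mem_univ, true_and] at ha
      exact and_odd n ψ φ a ha
  rw [e1, Finset.sum_product]
  unfold Prob
  rw [Finset.sum_filter, Finset.sum_filter, Finset.sum_mul_sum]

theorem stmt15 (n : ℕ) (ψ : QReg n) (hψ : ‖ψ‖ = 1) :
    Prob (ANDg n n ψ ψ) ≤ Prob ψ := by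
  have h0 : 0 ≤ Prob ψ := Finset.sum_nonneg fun _ _ => sq_nonneg _
  have hsum : ∑ j, ‖ψ j‖^2 = 1 := by
    have h := EuclideanSpace.norm_eq ψ
    rw [hψ] at h
    have := Real.sqrt_eq_one.mp h.symm
    simpa using this
  have h1 : Prob ψ ≤ 1 := by
    rw [← hsum]
    exact Finset.sum_le_sum_of_subset_of_nonneg (Finset.filter_subset _ _)
      (fun _ _ _ => sq_nonneg _)
  rw [prob_and]
  nlinarith


end
end

section
/- Weak distributivity fails: there exist unit vectors ψ, φ, χ in ℂ² such that Prob(OR(AND(ψ, φ), AND(ψ, χ))) > Prob(AND(ψ, OR(φ, χ))). (For example, this holds for ψ = φ = (√2/2)|0⟩ + (√2/2)|1⟩ and χ = (√3/2)|0⟩ + (1/2)|1⟩.) -/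
open Complex Finset

noncomputable section

lemma sum_pow_aux (n : ℕ) (f : Fin (2 ^ n) → ℝ) :
    ∑ j, f j = ∑ i ∈ Finset.range (2 ^ n),
      f ⟨i % 2 ^ n, Nat.mod_lt _ (Nat.two_pow_pos n)⟩ := by
  rw [← Fin.sum_univ_eq_sum_range]
  refine Finset.sum_congr rfl fun a _ => ?_
  congr 1
  exact Fin.ext (by simp [Nat.mod_eq_of_lt a.isLt])

lemma prob_eq (n : ℕ) (ψ : QReg n) :
    Prob ψ = ∑ i ∈ Finset.range (2 ^ n),
      if i % 2 = 1 then ‖ψ ⟨i % 2 ^ n, Nat.mod_lt _ (Nat.two_pow_pos n)⟩‖ ^ 2 else 0 := by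
  rw [Prob, Finset.sum_filter, sum_pow_aux n
    (fun j => if (j : ℕ) % 2 = 1 then ‖ψ j‖ ^ 2 else 0)]
  refine Finset.sum_congr rfl fun a ha => ?_
  simp [Nat.mod_eq_of_lt (Finset.mem_range.mp ha)]

set_option maxHeartbeats 4000000 in
theorem stmt19 :
    ∃ ψ φ χ : QReg 1, ‖ψ‖ = 1 ∧ ‖φ‖ = 1 ∧ ‖χ‖ = 1 ∧
      Prob (ANDg 1 (1 + 1 + 1) ψ (ORg 1 1 φ χ)) <
        Prob (ORg (1 + 1 + 1) (1 + 1 + 1) (ANDg 1 1 ψ φ) (ANDg 1 1 ψ χ)) := by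
  classical
  refine ⟨(WithLp.toLp 2 fun _ => (Real.sqrt 2 / 2 : ℂ)), (WithLp.toLp 2 fun _ => (Real.sqrt 2 / 2 : ℂ)),
    (WithLp.toLp 2 fun (j : Fin (2 ^ 1)) => if j.val = 0 then (Real.sqrt 3 / 2 : ℂ) else (1 / 2 : ℂ)), ?_, ?_, ?_, ?_⟩
  · rw [EuclideanSpace.norm_eq, sum_pow_aux 1 (fun _ => ‖(Real.sqrt 2 / 2 : ℂ)‖ ^ 2)]
    norm_num [Finset.sum_range_succ, norm_div, Complex.norm_real, _root_.sq_abs, Nat.reduceXor, div_pow,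
      Real.sq_sqrt (show (0:ℝ) ≤ 2 by norm_num)]
  · rw [EuclideanSpace.norm_eq, sum_pow_aux 1 (fun _ => ‖(Real.sqrt 2 / 2 : ℂ)‖ ^ 2)]
    norm_num [Finset.sum_range_succ, norm_div, Complex.norm_real, _root_.sq_abs, Nat.reduceXor, div_pow,
      Real.sq_sqrt (show (0:ℝ) ≤ 2 by norm_num)]
  · rw [EuclideanSpace.norm_eq, sum_pow_aux 1
      (fun j => ‖(if (j:ℕ) = 0 then (Real.sqrt 3 / 2 : ℂ) else (1/2 : ℂ))‖ ^ 2)]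
    norm_num [Finset.sum_range_succ, norm_div, Complex.norm_real, _root_.sq_abs, Nat.reduceXor, div_pow,
      Real.sq_sqrt (show (0:ℝ) ≤ 3 by norm_num)]
  · have h1 : Prob (ANDg 1 (1 + 1 + 1) (WithLp.toLp 2 fun _ => (Real.sqrt 2 / 2 : ℂ))
        (ORg 1 1 (WithLp.toLp 2 fun _ => (Real.sqrt 2 / 2 : ℂ))
          (WithLp.toLp 2 fun (j : Fin (2 ^ 1)) => if j.val = 0 then (Real.sqrt 3 / 2 : ℂ) else (1 / 2 : ℂ)))) = 5 / 16 := by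
      rw [prob_eq]
      norm_num +decide [ANDg, ORg, NOTg, Tg, tensor, ket0, toffIdx, flipIdx, Finset.sum_range_succ,
        norm_mul, norm_div, Complex.norm_real, _root_.sq_abs, Nat.reduceXor, mul_pow, div_pow,
        Real.sq_sqrt (show (0:ℝ) ≤ 2 by norm_num),
        Real.sq_sqrt (show (0:ℝ) ≤ 3 by norm_num)]
    have h2 : Prob (ORg (1 + 1 + 1) (1 + 1 + 1)
        (ANDg 1 1 (WithLp.toLp 2 fun _ => (Real.sqrt 2 / 2 : ℂ)) (WithLp.toLp 2 fun _ => (Real.sqrt 2 / 2 : ℂ)))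
        (ANDg 1 1 (WithLp.toLp 2 fun _ => (Real.sqrt 2 / 2 : ℂ))
          (WithLp.toLp 2 fun (j : Fin (2 ^ 1)) => if j.val = 0 then (Real.sqrt 3 / 2 : ℂ) else (1 / 2 : ℂ)))) = 11 / 32 := by
      rw [prob_eq]
      norm_num +decide [ANDg, ORg, NOTg, Tg, tensor, ket0, toffIdx, flipIdx, Finset.sum_range_succ,
        norm_mul, norm_div, Complex.norm_real, _root_.sq_abs, Nat.reduceXor, mul_pow, div_pow,
        Real.sq_sqrt (show (0:ℝ) ≤ 2 by norm_num),
        Real.sq_sqrt (show (0:ℝ) ≤ 3 by norm_num)]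
    rw [h1, h2]
    norm_num

end
end
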